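/- Let X(t) be a symmetric compound Poisson process with jumps X_k (i.i.d. symmetric) and rate λ, with partial sums S_n = X₁+⋯+X_n. Then for all u>0: P(sup_{0≤t≤1} X(t) > u) ≤ 2·P(X(1)>u) − D(u), where D(u) = e^{−λ}[λP(X₁>u) + Σ_{n=2}^∞ (λⁿ/n!)·P(max_{1≤k≤n−1} S_k ≤ u, S_n > u)]. -/

import Mathlib

open MeasureTheory ProbabilityTheory Filter Finset

lemma map_sum_symm' {Ω : Type*} [MeasurableSpace Ω] {μ : Measure Ω} [IsProbabilityMeasure μ]
    {X : ℕ → Ω → ℝ} (hXmeas : ∀ k, Measurable (X k))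
    (hXindep : iIndepFun X μ)
    (hXid : ∀ k, Measure.map (X k) μ = Measure.map (X 0) μ)
    (hXsym : Measure.map (X 0) μ = Measure.map (fun ω => -X 0 ω) μ)
    (s : Finset ℕ) :
    Measure.map (fun ω => ∑ i ∈ s, X i ω) μ
      = Measure.map (fun ω => -∑ i ∈ s, X i ω) μ := by
  classical
  have hmapX : ∀ k, Measure.map (X k) μ = Measure.map (fun ω => -X k ω) μ := by
    intro k
    have h1 : (fun ω => -X k ω) = (fun x : ℝ => -x) ∘ (X k) := rfl
    have h2 : (fun ω => -X 0 ω) = (fun x : ℝ => -x) ∘ (X 0) := rfl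
    rw [h1, ← Measure.map_map measurable_neg (hXmeas k), hXid k,
      Measure.map_map measurable_neg (hXmeas 0), ← h2, ← hXsym]
  induction s using Finset.induction with
  | empty => simp
  | @insert a s ha ih =>
    have hgmeas : Measurable (fun ω => ∑ i ∈ s, X i ω) :=
      Finset.measurable_sum s fun i _ => hXmeas i
    have hind : IndepFun (X a) (fun ω => ∑ i ∈ s, X i ω) μ := by
      have h := (hXindep.indepFun_finsetSum_of_notMem hXmeas ha).symm
      have : (∑ i ∈ s, X i) = (fun ω => ∑ i ∈ s, X i ω) := by
        funext ω; simp
      rwa [this] at h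
    have hind' : IndepFun (fun ω => -X a ω) (fun ω => -∑ i ∈ s, X i ω) μ :=
      hind.comp measurable_neg measurable_neg
    have hadd : Measurable (fun p : ℝ × ℝ => p.1 + p.2) :=
      measurable_fst.add measurable_snd
    have key := (indepFun_iff_map_prod_eq_prod_map_map (hXmeas a).aemeasurable
      hgmeas.aemeasurable).1 hind
    have key' := (indepFun_iff_map_prod_eq_prod_map_map (f := fun ω => -X a ω)
      (g := fun ω => -∑ i ∈ s, X i ω) (hXmeas a).neg.aemeasurable
      hgmeas.neg.aemeasurable).1 hind'
    have e1 : (fun ω => ∑ i ∈ insert a s, X i ω)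
        = (fun p : ℝ × ℝ => p.1 + p.2) ∘ (fun ω => (X a ω, ∑ i ∈ s, X i ω)) := by
      funext ω; simp [Finset.sum_insert ha]
    have e2 : (fun ω => -∑ i ∈ insert a s, X i ω)
        = (fun p : ℝ × ℝ => p.1 + p.2) ∘ (fun ω => (-X a ω, -∑ i ∈ s, X i ω)) := by
      funext ω; simp [Finset.sum_insert ha]; ring
    rw [e1, e2, ← Measure.map_map hadd ((hXmeas a).prodMk hgmeas),
      ← Measure.map_map hadd (by exact (hXmeas a).neg.prodMk hgmeas.neg :
        Measurable (fun ω => (-X a ω, -∑ i ∈ s, X i ω))), key, key',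
      ← hmapX a, ← ih]

lemma half_le_meas_nonneg' {Ω : Type*} [MeasurableSpace Ω] {μ : Measure Ω}
    [IsProbabilityMeasure μ] {T : Ω → ℝ} (hT : Measurable T)
    (hsym : Measure.map T μ = Measure.map (fun ω => -T ω) μ) :
    (2 : ENNReal)⁻¹ ≤ μ {ω | 0 ≤ T ω} := by
  have hmap : IsProbabilityMeasure (μ.map T) := Measure.isProbabilityMeasure_map hT.aemeasurable
  have hIci : μ {ω | 0 ≤ T ω} = μ.map T (Set.Ici 0) := by
    rw [Measure.map_apply hT measurableSet_Ici]; rfl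
  have hpre : (fun ω => -T ω) ⁻¹' Set.Ici 0 = T ⁻¹' Set.Iic 0 := by
    ext ω; simp [neg_nonneg]
  have hIic : μ.map T (Set.Ici 0) = μ.map T (Set.Iic 0) := by
    calc μ.map T (Set.Ici 0) = μ ((fun ω => -T ω) ⁻¹' Set.Ici 0) := by
          rw [hsym, Measure.map_apply (by exact hT.neg : Measurable (fun ω => -T ω)) measurableSet_Ici]
      _ = μ (T ⁻¹' Set.Iic 0) := by rw [hpre]
      _ = μ.map T (Set.Iic 0) := (Measure.map_apply hT measurableSet_Iic).symm
  have h1 : (1 : ENNReal) ≤ μ.map T (Set.Ici 0) + μ.map T (Set.Iic 0) := by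
    have huniv : (Set.Ici (0:ℝ)) ∪ Set.Iic 0 = Set.univ := by
      ext x; simp [le_total 0 x]
    calc (1 : ENNReal) = μ.map T Set.univ := (measure_univ).symm
      _ = μ.map T (Set.Ici 0 ∪ Set.Iic 0) := by rw [huniv]
      _ ≤ _ := measure_union_le _ _
  rw [hIci]
  by_contra h
  push_neg at h
  have := ENNReal.add_lt_add h (hIic ▸ h)
  rw [ENNReal.inv_two_add_inv_two] at this
  exact absurd h1 (not_le.2 this)

set_option maxHeartbeats 1000000 in
theorem refined_levy_inequality
    {Ω : Type*} [MeasurableSpace Ω] (μ : Measure Ω) [IsProbabilityMeasure μ]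
    (N : ℝ → Ω → ℕ) (X : ℕ → Ω → ℝ) (l : ℝ)
    -- N is a Poisson process with rate l
    (hl : 0 < l)
    (hNmeas : ∀ t, Measurable (N t))
    (hN0 : ∀ ω, N 0 ω = 0)
    (hNmono : ∀ ω, ∀ ⦃s t : ℝ⦄, s ≤ t → N s ω ≤ N t ω)
    (hNincr : ∀ s t : ℝ, 0 ≤ s → s ≤ t → ∀ n : ℕ,
        μ {ω | N t ω - N s ω = n}
          = ENNReal.ofReal (Real.exp (-(l * (t - s))) * (l * (t - s)) ^ n
              / (Nat.factorial n)))
    (hNind : ∀ n : ℕ, ∀ t : Fin (n + 1) → ℝ, Monotone t → (∀ i, 0 ≤ t i) →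
        iIndepFun
          (fun i : Fin n => fun ω => N (t i.succ) ω - N (t i.castSucc) ω) μ)
    -- i.i.d. symmetric jumps, independent of N
    (hXmeas : ∀ k, Measurable (X k))
    (hXindep : iIndepFun X μ)
    (hXid : ∀ k, Measure.map (X k) μ = Measure.map (X 0) μ)
    (hXsym : Measure.map (X 0) μ = Measure.map (fun ω => -X 0 ω) μ)
    (hNX : IndepFun (fun ω => fun t : ℝ => N t ω) (fun ω => fun k : ℕ => X k ω) μ)
    (D : ℝ → ℝ)
    (hD : ∀ u : ℝ, D u = Real.exp (-l) *
        (l * (μ {ω | X 0 ω > u}).toReal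
          + ∑' m : ℕ, (l ^ (m + 2) / (Nat.factorial (m + 2))) *
              (μ {ω | (∀ k ∈ Icc 1 (m + 1), ∑ i ∈ range k, X i ω ≤ u)
                  ∧ ∑ i ∈ range (m + 2), X i ω > u}).toReal)) :
    ∀ u : ℝ, 0 < u →
      (μ {ω | (⨆ t : Set.Icc (0:ℝ) 1, ∑ i ∈ range (N (t : ℝ) ω), X i ω) > u}).toReal
        ≤ 2 * (μ {ω | ∑ i ∈ range (N 1 ω), X i ω > u}).toReal - D u := by
  intro u hu
  classical
  -- path map for X
  set Xp : Ω → ℕ → ℝ := fun ω k => X k ω with hXp_def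
  have hXpm : Measurable Xp := measurable_pi_lambda _ fun k => hXmeas k
  -- path-level sets
  set Cs : ℕ → Set (ℕ → ℝ) := fun n =>
    {g | (∀ j ∈ Icc 1 (n - 1), ∑ i ∈ range j, g i ≤ u) ∧ ∑ i ∈ range n, g i > u}
    with hCs_def
  set Gs : ℕ → Set (ℕ → ℝ) := fun n =>
    {g | ∃ k ∈ Icc 1 n, ∑ i ∈ range k, g i > u} with hGs_def
  set Bs : ℕ → Set (ℕ → ℝ) := fun n => {g | ∑ i ∈ range n, g i > u} with hBs_def
  have hsum_meas : ∀ n : ℕ, Measurable (fun g : ℕ → ℝ => ∑ i ∈ range n, g i) :=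
    fun n => Finset.measurable_sum _ fun i _ => measurable_pi_apply i
  have hCs_meas : ∀ n, MeasurableSet (Cs n) := by
    intro n
    have he : Cs n = (⋂ j ∈ Icc 1 (n-1), {g : ℕ → ℝ | ∑ i ∈ range j, g i ≤ u})
        ∩ {g : ℕ → ℝ | u < ∑ i ∈ range n, g i} := by
      ext g; simp [hCs_def, Set.mem_iInter]
    rw [he]
    exact (MeasurableSet.biInter (Set.to_countable _)
      fun j _ => measurableSet_le (hsum_meas j) measurable_const).inter
      (measurableSet_lt measurable_const (hsum_meas n))
  have hBs_meas : ∀ n, MeasurableSet (Bs n) :=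
    fun n => measurableSet_lt measurable_const (hsum_meas n)
  have hGs_meas : ∀ n, MeasurableSet (Gs n) := by
    intro n
    have he : Gs n = ⋃ k ∈ Icc 1 n, {g : ℕ → ℝ | u < ∑ i ∈ range k, g i} := by
      ext g; simp [hGs_def]
    rw [he]
    exact MeasurableSet.biUnion (Set.to_countable _)
      fun k _ => measurableSet_lt measurable_const (hsum_meas k)
  -- the Poisson weights
  set p : ℕ → ENNReal := fun n => μ {ω | N 1 ω = n} with hp_def
  have hNev : ∀ n, MeasurableSet {ω | N 1 ω = n} :=
    fun n => (hNmeas 1) (measurableSet_singleton n)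
  have hpval : ∀ n, p n = ENNReal.ofReal (Real.exp (-l) * l ^ n / n.factorial) := by
    intro n
    have h := hNincr 0 1 le_rfl zero_le_one n
    have hset : {ω | N 1 ω - N 0 ω = n} = {ω | N 1 ω = n} := by
      ext ω; simp [hN0 ω]
    rw [hset] at h
    rw [hp_def]
    simpa using h
  -- independence between N(1) and the jumps
  have hmul : ∀ (n : ℕ) (C : Set (ℕ → ℝ)), MeasurableSet C →
      μ ({ω | N 1 ω = n} ∩ Xp ⁻¹' C) = p n * μ (Xp ⁻¹' C) := by
    intro n C hC
    have hset : MeasurableSet {f : ℝ → ℕ | f 1 = n} := by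
      have : {f : ℝ → ℕ | f 1 = n} = (fun f : ℝ → ℕ => f 1) ⁻¹' {n} := rfl
      rw [this]
      exact measurable_pi_apply (1:ℝ) (measurableSet_singleton n)
    exact hNX.measure_inter_preimage_eq_mul _ _ hset hC
  -- independence of first-passage event and later increment
  have hblock : ∀ k m : ℕ, k ≤ m →
      μ ((Xp ⁻¹' Cs k) ∩ {ω | 0 ≤ ∑ i ∈ Ico k m, X i ω})
        = μ (Xp ⁻¹' Cs k) * μ {ω | 0 ≤ ∑ i ∈ Ico k m, X i ω} := by
    intro k m hkm
    have hdisj : Disjoint (range k) (Ico k m) := by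
      simp only [Finset.disjoint_left, Finset.mem_range, Finset.mem_Ico]
      intro i hi
      omega
    have hIF := hXindep.indepFun_finset (range k) (Ico k m) hdisj hXmeas
    set ext1 : ((i : (range k : Finset ℕ)) → ℝ) → (ℕ → ℝ) :=
      fun v i => if h : i ∈ range k then v ⟨i, h⟩ else 0 with hext1_def
    set ext2 : ((i : (Ico k m : Finset ℕ)) → ℝ) → (ℕ → ℝ) :=
      fun v i => if h : i ∈ Ico k m then v ⟨i, h⟩ else 0 with hext2_def
    have hext1 : Measurable ext1 := by
      refine measurable_pi_lambda _ fun i => ?_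
      by_cases h : i ∈ range k
      · simp only [hext1_def, h, dif_pos]
        exact measurable_pi_apply _
      · simp only [hext1_def, h, dif_neg, not_false_iff]
        exact measurable_const
    have hext2 : Measurable ext2 := by
      refine measurable_pi_lambda _ fun i => ?_
      by_cases h : i ∈ Ico k m
      · simp only [hext2_def, h, dif_pos]
        exact measurable_pi_apply _
      · simp only [hext2_def, h, dif_neg, not_false_iff]
        exact measurable_const
    set F : Ω → (i : (range k : Finset ℕ)) → ℝ := fun ω i => X i ω with hF_def
    set G : Ω → (i : (Ico k m : Finset ℕ)) → ℝ := fun ω i => X i ω with hG_def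
    set E2 : Set (ℕ → ℝ) := {g | 0 ≤ ∑ i ∈ Ico k m, g i} with hE2_def
    have hE2meas : MeasurableSet E2 :=
      measurableSet_le measurable_const (Finset.measurable_sum _ fun i _ => measurable_pi_apply i)
    have hA : Xp ⁻¹' Cs k = F ⁻¹' (ext1 ⁻¹' Cs k) := by
      ext ω
      have hagree : ∀ j, j ≤ k → ∑ i ∈ range j, ext1 (F ω) i = ∑ i ∈ range j, X i ω := by
        intro j hj
        refine Finset.sum_congr rfl fun i hi => ?_
        have hik : i ∈ range k := mem_range.2 (lt_of_lt_of_le (mem_range.1 hi) hj)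
        simp only [hext1_def, hF_def]
        rw [dif_pos hik]
      simp only [Set.mem_preimage, hCs_def, Set.mem_setOf_eq, hXp_def]
      constructor
      · rintro ⟨h1, h2⟩
        refine ⟨fun j hj => ?_, ?_⟩
        · rw [hagree j ((mem_Icc.1 hj).2.trans (Nat.sub_le k 1))]
          exact h1 j hj
        · rw [hagree k le_rfl]; exact h2
      · rintro ⟨h1, h2⟩
        refine ⟨fun j hj => ?_, ?_⟩
        · rw [← hagree j ((mem_Icc.1 hj).2.trans (Nat.sub_le k 1))]
          exact h1 j hj
        · rw [← hagree k le_rfl]; exact h2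
    have hT : {ω | 0 ≤ ∑ i ∈ Ico k m, X i ω} = G ⁻¹' (ext2 ⁻¹' E2) := by
      ext ω
      have hagree : ∑ i ∈ Ico k m, ext2 (G ω) i = ∑ i ∈ Ico k m, X i ω := by
        refine Finset.sum_congr rfl fun i hi => ?_
        simp only [hext2_def, hG_def]
        rw [dif_pos hi]
      simp only [Set.mem_preimage, hE2_def, Set.mem_setOf_eq, hagree]
    rw [hA, hT]
    exact hIF.measure_inter_preimage_eq_mul _ _ (hext1 (hCs_meas k)) (hext2 hE2meas)
  -- symmetric increments: probability of nonnegativity at least one half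
  have hhalf : ∀ k m : ℕ, (2 : ENNReal)⁻¹ ≤ μ {ω | 0 ≤ ∑ i ∈ Ico k m, X i ω} := by
    intro k m
    exact half_le_meas_nonneg' (Finset.measurable_sum _ fun i _ => hXmeas i)
      (map_sum_symm' hXmeas hXindep hXid hXsym (Ico k m))
  -- splitting of partial sums
  have hsplit : ∀ (k m : ℕ), k ≤ m → ∀ ω : Ω,
      ∑ i ∈ range m, X i ω = ∑ i ∈ range k, X i ω + ∑ i ∈ Ico k m, X i ω := by
    intro k m hkm ω
    have h := Finset.sum_Ico_consecutive (fun i => X i ω) (Nat.zero_le k) hkm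
    simp only [← Finset.range_eq_Ico] at h
    exact h.symm
  -- disjointness of first-passage events
  have hCdisj : ∀ k k' : ℕ, k < k' → Disjoint (Xp ⁻¹' Cs k) (Xp ⁻¹' Cs k') := by
    intro k k' hkk'
    rw [Set.disjoint_left]
    intro ω hω hω'
    simp only [Set.mem_preimage, hCs_def, Set.mem_setOf_eq] at hω hω'
    have hk_mem : k ∈ Icc 1 (k' - 1) := by
      refine mem_Icc.2 ⟨?_, ?_⟩
      · by_contra h
        push_neg at h
        have hk0 : k = 0 := by omega
        subst hk0
        have h2 := hω.2
        rw [Finset.range_zero, Finset.sum_empty] at h2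
        linarith
      · omega
    exact absurd (hω'.1 k hk_mem) (not_le.2 hω.2)
  -- per-n key inequality
  have hkey : ∀ n : ℕ,
      μ (Xp ⁻¹' Gs (n + 1)) + μ (Xp ⁻¹' Cs (n + 1)) ≤ 2 * μ (Xp ⁻¹' Bs (n + 1)) := by
    intro n
    -- cover by first passage events
    have hGsub : Xp ⁻¹' Gs (n+1) ⊆ ⋃ k ∈ (Icc 1 (n+1) : Finset ℕ), Xp ⁻¹' Cs k := by
      intro ω hω
      simp only [Set.mem_preimage, hGs_def, Set.mem_setOf_eq] at hω
      obtain ⟨k0, hk0, hk0'⟩ := hω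
      have hex : ∃ k, 1 ≤ k ∧ ∑ i ∈ range k, X i ω > u :=
        ⟨k0, (mem_Icc.1 hk0).1, hk0'⟩
      have hk := Nat.find_spec hex
      have hkle : Nat.find hex ≤ k0 := Nat.find_le ⟨(mem_Icc.1 hk0).1, hk0'⟩
      refine Set.mem_biUnion (Finset.mem_coe.2 (mem_Icc.2 ⟨hk.1, hkle.trans (mem_Icc.1 hk0).2⟩)) ?_
      simp only [Set.mem_preimage, hCs_def, Set.mem_setOf_eq]
      refine ⟨fun j hj => ?_, hk.2⟩
      have hjlt : j < Nat.find hex := by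
        have := (mem_Icc.1 hj).2
        omega
      have hmin := Nat.find_min hex hjlt
      push_neg at hmin
      exact hmin (mem_Icc.1 hj).1
    have hstep : ∀ k ∈ Icc 1 n, μ (Xp ⁻¹' Cs k) ≤ 2 * μ (Xp ⁻¹' Cs k ∩ Xp ⁻¹' Bs (n+1)) := by
      intro k hk
      have hkm : k ≤ n + 1 := by have := (mem_Icc.1 hk).2; omega
      have hsub2 : Xp ⁻¹' Cs k ∩ {ω | 0 ≤ ∑ i ∈ Ico k (n+1), X i ω}
          ⊆ Xp ⁻¹' Cs k ∩ Xp ⁻¹' Bs (n+1) := by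
        rintro ω ⟨h1, h2⟩
        refine ⟨h1, ?_⟩
        simp only [Set.mem_preimage, hCs_def, Set.mem_setOf_eq, hXp_def] at h1
        simp only [Set.mem_preimage, hBs_def, Set.mem_setOf_eq, hXp_def]
        simp only [Set.mem_setOf_eq] at h2
        have hs := hsplit k (n+1) hkm ω
        have h12 := h1.2
        calc u < ∑ i ∈ range k, X i ω := h12
          _ ≤ ∑ i ∈ range (n+1), X i ω := by rw [hs]; linarith
      calc μ (Xp ⁻¹' Cs k) = 2 * (2⁻¹ * μ (Xp ⁻¹' Cs k)) := by
            rw [← mul_assoc, ENNReal.mul_inv_cancel two_ne_zero ENNReal.ofNat_ne_top, one_mul]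
        _ ≤ 2 * (μ {ω | 0 ≤ ∑ i ∈ Ico k (n+1), X i ω} * μ (Xp ⁻¹' Cs k)) := by
            gcongr
            exact hhalf k (n+1)
        _ = 2 * μ (Xp ⁻¹' Cs k ∩ {ω | 0 ≤ ∑ i ∈ Ico k (n+1), X i ω}) := by
            rw [hblock k (n+1) hkm, mul_comm (μ (Xp ⁻¹' Cs k))]
        _ ≤ 2 * μ (Xp ⁻¹' Cs k ∩ Xp ⁻¹' Bs (n+1)) := by
            gcongr
    have hdisj_fam : Set.PairwiseDisjoint ↑(Icc 1 (n+1) : Finset ℕ)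
        (fun k => Xp ⁻¹' Cs k ∩ Xp ⁻¹' Bs (n+1)) := by
      intro a _ b _ hab
      rcases lt_or_gt_of_ne hab with h | h
      · exact (hCdisj a b h).mono Set.inter_subset_left Set.inter_subset_left
      · exact ((hCdisj b a h).symm).mono Set.inter_subset_left Set.inter_subset_left
    have hmeasfam : ∀ k ∈ (Icc 1 (n+1) : Finset ℕ),
        MeasurableSet (Xp ⁻¹' Cs k ∩ Xp ⁻¹' Bs (n+1)) :=
      fun k _ => (hXpm (hCs_meas k)).inter (hXpm (hBs_meas (n+1)))
    have hAm_inter : Xp ⁻¹' Cs (n+1) ∩ Xp ⁻¹' Bs (n+1) = Xp ⁻¹' Cs (n+1) := by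
      apply Set.inter_eq_left.2
      intro ω hω
      simp only [Set.mem_preimage, hCs_def, Set.mem_setOf_eq] at hω
      simp only [Set.mem_preimage, hBs_def, Set.mem_setOf_eq]
      exact hω.2
    calc μ (Xp ⁻¹' Gs (n+1)) + μ (Xp ⁻¹' Cs (n+1))
        ≤ (∑ k ∈ Icc 1 (n+1), μ (Xp ⁻¹' Cs k)) + μ (Xp ⁻¹' Cs (n+1)) := by
          gcongr
          exact (measure_mono hGsub).trans (measure_biUnion_finset_le _ _)
      _ = ((∑ k ∈ Icc 1 n, μ (Xp ⁻¹' Cs k)) + μ (Xp ⁻¹' Cs (n+1))) + μ (Xp ⁻¹' Cs (n+1)) := by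
          rw [Finset.sum_Icc_succ_top (by omega : 1 ≤ n + 1)]
      _ ≤ ((∑ k ∈ Icc 1 n, 2 * μ (Xp ⁻¹' Cs k ∩ Xp ⁻¹' Bs (n+1))) + μ (Xp ⁻¹' Cs (n+1)))
            + μ (Xp ⁻¹' Cs (n+1)) := by
          gcongr with k hk
          exact hstep k hk
      _ = 2 * ((∑ k ∈ Icc 1 n, μ (Xp ⁻¹' Cs k ∩ Xp ⁻¹' Bs (n+1))) + μ (Xp ⁻¹' Cs (n+1))) := by
          rw [mul_add, Finset.mul_sum]; ring
      _ = 2 * ∑ k ∈ Icc 1 (n+1), μ (Xp ⁻¹' Cs k ∩ Xp ⁻¹' Bs (n+1)) := by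
          rw [Finset.sum_Icc_succ_top (by omega : 1 ≤ n + 1), hAm_inter]
      _ = 2 * μ (⋃ k ∈ (Icc 1 (n+1) : Finset ℕ), Xp ⁻¹' Cs k ∩ Xp ⁻¹' Bs (n+1)) := by
          rw [measure_biUnion_finset hdisj_fam hmeasfam]
      _ ≤ 2 * μ (Xp ⁻¹' Bs (n+1)) := by
          gcongr
          exact Set.iUnion₂_subset fun k _ => Set.inter_subset_right
  -- Step 1: bound the supremum event
  haveI : Nonempty (Set.Icc (0:ℝ) 1) := ⟨⟨0, by norm_num⟩⟩
  have hsubLHS : {ω | (⨆ t : Set.Icc (0:ℝ) 1, ∑ i ∈ range (N (t : ℝ) ω), X i ω) > u}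
      ⊆ ⋃ n, ({ω | N 1 ω = n} ∩ Xp ⁻¹' Gs n) := by
    intro ω hω
    simp only [Set.mem_setOf_eq] at hω
    have hex : ∃ t : Set.Icc (0:ℝ) 1, ∑ i ∈ range (N (t : ℝ) ω) , X i ω > u := by
      by_contra h
      push_neg at h
      exact absurd (ciSup_le h) (not_le.2 hω)
    obtain ⟨t, ht⟩ := hex
    refine Set.mem_iUnion.2 ⟨N 1 ω, ⟨rfl, ?_⟩⟩
    simp only [Set.mem_preimage, hGs_def, Set.mem_setOf_eq, hXp_def]
    refine ⟨N (t : ℝ) ω, mem_Icc.2 ⟨?_, hNmono ω t.2.2⟩, ht⟩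
    by_contra h
    push_neg at h
    have h0 : N (t:ℝ) ω = 0 := by omega
    rw [h0, Finset.range_zero, Finset.sum_empty] at ht
    linarith
  have hLHS : μ {ω | (⨆ t : Set.Icc (0:ℝ) 1, ∑ i ∈ range (N (t : ℝ) ω), X i ω) > u}
      ≤ ∑' n : ℕ, p n * μ (Xp ⁻¹' Gs n) := by
    refine (measure_mono hsubLHS).trans ((measure_iUnion_le _).trans (le_of_eq ?_))
    exact tsum_congr fun n => hmul n (Gs n) (hGs_meas n)
  -- lower bound for the endpoint probability
  have hb : ∑' n : ℕ, p n * μ (Xp ⁻¹' Bs n) ≤ μ {ω | ∑ i ∈ range (N 1 ω), X i ω > u} := by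
    have hdisjN : Pairwise (Function.onFun Disjoint fun n => {ω | N 1 ω = n} ∩ Xp ⁻¹' Bs n) := by
      intro a b hab
      refine Set.disjoint_left.2 ?_
      rintro ω ⟨ha, _⟩ ⟨hb', _⟩
      exact hab (ha.symm.trans hb')
    calc ∑' n : ℕ, p n * μ (Xp ⁻¹' Bs n)
        = ∑' n : ℕ, μ ({ω | N 1 ω = n} ∩ Xp ⁻¹' Bs n) :=
          tsum_congr fun n => (hmul n (Bs n) (hBs_meas n)).symm
      _ = μ (⋃ n, {ω | N 1 ω = n} ∩ Xp ⁻¹' Bs n) :=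
          (measure_iUnion hdisjN fun n => (hNev n).inter (hXpm (hBs_meas n))).symm
      _ ≤ μ {ω | ∑ i ∈ range (N 1 ω), X i ω > u} := by
          refine measure_mono (Set.iUnion_subset fun n => ?_)
          rintro ω ⟨h1, h2⟩
          simp only [Set.mem_setOf_eq] at h1 ⊢
          simp only [Set.mem_preimage, hBs_def, Set.mem_setOf_eq, hXp_def] at h2
          rw [h1]
          exact h2
  -- main ENNReal inequality
  set d : ENNReal := ∑' n : ℕ, p (n+1) * μ (Xp ⁻¹' Cs (n+1)) with hd_def
  have hG0 : μ (Xp ⁻¹' Gs 0) = 0 := by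
    have he : Xp ⁻¹' Gs 0 = ∅ := by
      ext ω
      simp only [Set.mem_preimage, hGs_def, Set.mem_setOf_eq, Set.mem_empty_iff_false,
        iff_false, not_exists]
      intro k hk
      have := mem_Icc.1 hk.1
      omega
    rw [he, measure_empty]
  have hmain : μ {ω | (⨆ t : Set.Icc (0:ℝ) 1, ∑ i ∈ range (N (t : ℝ) ω), X i ω) > u} + d
      ≤ 2 * μ {ω | ∑ i ∈ range (N 1 ω), X i ω > u} := by
    calc μ {ω | (⨆ t : Set.Icc (0:ℝ) 1, ∑ i ∈ range (N (t : ℝ) ω), X i ω) > u} + d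
        ≤ (∑' n : ℕ, p n * μ (Xp ⁻¹' Gs n)) + d := add_le_add hLHS le_rfl
      _ = (p 0 * μ (Xp ⁻¹' Gs 0) + ∑' n : ℕ, p (n+1) * μ (Xp ⁻¹' Gs (n+1))) + d := by
          rw [tsum_eq_zero_add' ENNReal.summable]
      _ = (∑' n : ℕ, p (n+1) * μ (Xp ⁻¹' Gs (n+1))) + d := by rw [hG0, mul_zero, zero_add]
      _ = ∑' n : ℕ, (p (n+1) * μ (Xp ⁻¹' Gs (n+1)) + p (n+1) * μ (Xp ⁻¹' Cs (n+1))) := by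
          rw [hd_def, ENNReal.tsum_add]
      _ = ∑' n : ℕ, p (n+1) * (μ (Xp ⁻¹' Gs (n+1)) + μ (Xp ⁻¹' Cs (n+1))) :=
          tsum_congr fun n => (mul_add _ _ _).symm
      _ ≤ ∑' n : ℕ, p (n+1) * (2 * μ (Xp ⁻¹' Bs (n+1))) :=
          ENNReal.tsum_le_tsum fun n => mul_le_mul_right (hkey n) _
      _ = 2 * ∑' n : ℕ, p (n+1) * μ (Xp ⁻¹' Bs (n+1)) := by
          rw [← ENNReal.tsum_mul_left]
          exact tsum_congr fun n => by ring
      _ ≤ 2 * ∑' n : ℕ, p n * μ (Xp ⁻¹' Bs n) := by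
          refine mul_le_mul_right ?_ _
          exact le_trans le_add_self (tsum_eq_zero_add' ENNReal.summable).symm.le
      _ ≤ 2 * μ {ω | ∑ i ∈ range (N 1 ω), X i ω > u} := mul_le_mul_right hb _
  have h2ne : (2 : ENNReal) * μ {ω | ∑ i ∈ range (N 1 ω), X i ω > u} ≠ ⊤ :=
    ENNReal.mul_ne_top (by norm_num) (measure_ne_top μ _)
  have hd_ne : d ≠ ⊤ :=
    ne_top_of_le_ne_top h2ne ((self_le_add_left d _).trans hmain)
  -- identify D u
  have hA1 : {ω | X 0 ω > u} = Xp ⁻¹' Cs 1 := by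
    ext ω
    simp only [Set.mem_setOf_eq, Set.mem_preimage, hCs_def, hXp_def, Finset.sum_range_one]
    constructor
    · intro h
      refine ⟨fun j hj => ?_, h⟩
      have := mem_Icc.1 hj
      omega
    · intro h
      exact h.2
  have hAm2 : ∀ m : ℕ, {ω | (∀ k ∈ Icc 1 (m + 1), ∑ i ∈ range k, X i ω ≤ u)
      ∧ ∑ i ∈ range (m + 2), X i ω > u} = Xp ⁻¹' Cs (m+2) := by
    intro m
    ext ω
    simp only [Set.mem_preimage, hCs_def, Set.mem_setOf_eq, hXp_def]
    norm_num
  have hptoReal : ∀ n : ℕ, (p n).toReal = Real.exp (-l) * l ^ n / n.factorial := by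
    intro n
    rw [hpval n, ENNReal.toReal_ofReal]
    positivity
  have hterm : ∀ k : ℕ, (p k * μ (Xp ⁻¹' Cs k)).toReal
      = Real.exp (-l) * l ^ k / k.factorial * (μ (Xp ⁻¹' Cs k)).toReal := by
    intro k
    rw [ENNReal.toReal_mul, hptoReal]
  have hDu : D u = d.toReal := by
    have h1 : d.toReal = ∑' n : ℕ, (p (n+1) * μ (Xp ⁻¹' Cs (n+1))).toReal := by
      rw [hd_def]
      exact ENNReal.tsum_toReal_eq fun n =>
        ENNReal.mul_ne_top (by rw [hpval]; exact ENNReal.ofReal_ne_top) (measure_ne_top μ _)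
    have hsummable : Summable fun n : ℕ => (p (n+1) * μ (Xp ⁻¹' Cs (n+1))).toReal := by
      apply ENNReal.summable_toReal
      rw [← hd_def]
      exact hd_ne
    have h2 : d.toReal = (p 1 * μ (Xp ⁻¹' Cs 1)).toReal
        + ∑' n : ℕ, (p (n+2) * μ (Xp ⁻¹' Cs (n+2))).toReal := by
      rw [h1, Summable.tsum_eq_zero_add hsummable]
    rw [hD u, hA1, h2]
    simp only [hAm2]
    rw [mul_add, ← tsum_mul_left]
    congr 1
    · rw [hterm 1]
      simp [Nat.factorial_one, pow_one]
      ring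
    · refine tsum_congr fun m => ?_
      rw [hterm (m+2)]
      ring
  -- conclusion
  have htR := ENNReal.toReal_mono h2ne hmain
  rw [ENNReal.toReal_add (measure_ne_top μ _) hd_ne, ENNReal.toReal_mul] at htR
  have h2eq : (2 : ENNReal).toReal = 2 := by norm_num
  rw [h2eq] at htR
  rw [hDu]
  linarith
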